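/- Let n and N be nonnegative integers with N ≤ 2n−3, and let f_0, …, f_N be positive integers such that f_0 = 2, f_i = f_{i−1} ± 1 for 1 ≤ i ≤ N, and f_i ≤ 2n−i−2 for 0 ≤ i ≤ N. Then there exists an F-matrix F of size 2n−2 with F_{i,i} = f_i for all 0 ≤ i ≤ N. -/
import Mathlib


/-- An **F**-matrix of size `2n-2` (for a fully heterochronous ranked tree shape with
`n` leaves), modeled as a function `ℤ → ℤ → ℤ` of nonnegative integer entries that
vanishes outside the index range `0 ≤ j ≤ i ≤ 2n-3`. -/
structure IsFMatrix (n : ℕ) (F : ℤ → ℤ → ℤ) : Prop where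
  nonneg : ∀ i j : ℤ, 0 ≤ F i j
  zero_outside : ∀ i j : ℤ, j < 0 ∨ i < j ∨ 2 * (n : ℤ) - 3 < i → F i j = 0
  row_mono : ∀ i j : ℤ, 1 ≤ j → j ≤ i → i ≤ 2 * (n : ℤ) - 3 → F i (j - 1) ≤ F i j
  col_lb : ∀ i j : ℤ, 0 ≤ j → j < i → i ≤ 2 * (n : ℤ) - 3 → F (i - 1) j - 1 ≤ F i j
  col_ub : ∀ i j : ℤ, 0 ≤ j → j < i → i ≤ 2 * (n : ℤ) - 3 → F i j ≤ F (i - 1) j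
  diag_pos : ∀ i : ℤ, 0 ≤ i → i ≤ 2 * (n : ℤ) - 3 → 0 < F i i
  diag_first : F 0 0 = 2
  diag_step : ∀ i : ℤ, 0 < i → i < 2 * (n : ℤ) - 3 →
      F i i = F (i - 1) (i - 1) + 1 ∨ F i i = F (i - 1) (i - 1) - 1
  diag_last : F (2 * (n : ℤ) - 3) (2 * (n : ℤ) - 3) = 1
  subdiag : ∀ i : ℤ, 1 ≤ i → i ≤ 2 * (n : ℤ) - 3 → F i (i - 1) = F (i - 1) (i - 1) - 1
  inner_lb : ∀ i j : ℤ, 2 ≤ i → i ≤ 2 * (n : ℤ) - 3 → 1 ≤ j → j ≤ i - 2 →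
      F i (j - 1) + F (i - 1) j - F (i - 1) (j - 1) - 1 ≤ F i j
  inner_ub : ∀ i j : ℤ, 2 ≤ i → i ≤ 2 * (n : ℤ) - 3 → 1 ≤ j → j ≤ i - 2 →
      F i j ≤ F i (j - 1) + F (i - 1) j - F (i - 1) (j - 1)

/-- Corollary on diagonals: any valid partial diagonal sequence is the
diagonal of some F-matrix of size `2n-2`. -/
theorem exists_fmatrix_with_diagonal (n N : ℕ) (hN : (N : ℤ) ≤ 2 * (n : ℤ) - 3)
    (f : ℤ → ℤ)
    (hpos : ∀ i : ℤ, 0 ≤ i → i ≤ (N : ℤ) → 0 < f i)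
    (h0 : f 0 = 2)
    (hstep : ∀ i : ℤ, 1 ≤ i → i ≤ (N : ℤ) → f i = f (i - 1) + 1 ∨ f i = f (i - 1) - 1)
    (hbd : ∀ i : ℤ, 0 ≤ i → i ≤ (N : ℤ) → f i ≤ 2 * (n : ℤ) - i - 2) :
    ∃ F : ℤ → ℤ → ℤ, IsFMatrix n F ∧ ∀ i : ℤ, 0 ≤ i → i ≤ (N : ℤ) → F i i = f i := by
  have hN0 : (0:ℤ) ≤ (N:ℤ) := Int.natCast_nonneg N
  have hM0 : (0:ℤ) ≤ 2*(n:ℤ) - 3 := le_trans hN0 hN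
  -- parity of f
  have hparN : ∀ k : ℕ, (k:ℤ) ≤ (N:ℤ) → f (k:ℤ) % 2 = (k:ℤ) % 2 := by
    intro k
    induction k with
    | zero => intro _; norm_num [h0]
    | succ k ih =>
      intro hk
      have hk' : (k:ℤ) ≤ (N:ℤ) := by push_cast at hk ⊢; omega
      have ihk := ih hk'
      have hs := hstep ((k:ℤ)+1) (by omega) (by push_cast at hk ⊢; omega)
      have he : ((k:ℤ)+1) - 1 = (k:ℤ) := by ring
      rw [he] at hs
      push_cast
      omega
  have hparZ : ∀ i : ℤ, 0 ≤ i → i ≤ (N:ℤ) → f i % 2 = i % 2 := by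
    intro i h1 h2
    lift i to ℕ using h1
    exact hparN i h2
  have hfN1 : 0 < f (N:ℤ) := hpos N hN0 le_rfl
  have hfNp : f (N:ℤ) % 2 = (N:ℤ) % 2 := hparZ N hN0 le_rfl
  -- extend the diagonal
  obtain ⟨g, gA, g0, gpos, gstep, glast⟩ :
      ∃ g : ℤ → ℤ, (∀ i : ℤ, 0 ≤ i → i ≤ (N:ℤ) → g i = f i) ∧ g 0 = 2 ∧
        (∀ i : ℤ, 0 ≤ i → i ≤ 2*(n:ℤ)-3 → 1 ≤ g i) ∧
        (∀ i : ℤ, 1 ≤ i → i ≤ 2*(n:ℤ)-3 → g i = g (i-1) + 1 ∨ g i = g (i-1) - 1) ∧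
        g (2*(n:ℤ)-3) = 1 := by
    refine ⟨fun i => if i ≤ (N:ℤ) then f i
        else max (f (N:ℤ) + (N:ℤ) - i) (if i % 2 = 0 then 2 else 1), ?_, ?_, ?_, ?_, ?_⟩
    · intro i h1 h2
      simp only [if_pos h2]
    · simp only [if_pos hN0, h0]
    · intro i h1 h2
      simp only
      split_ifs with h hp
      · have := hpos i h1 h; omega
      · have := le_max_right (f (N:ℤ) + (N:ℤ) - i) (2:ℤ); omega
      · have := le_max_right (f (N:ℤ) + (N:ℤ) - i) (1:ℤ); omega
    · intro i h1 h2
      by_cases hiN : i ≤ (N:ℤ)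
      · simp only [if_pos hiN, if_pos (by omega : i - 1 ≤ (N:ℤ))]
        exact hstep i h1 hiN
      · push_neg at hiN
        simp only [if_neg (by omega : ¬ i ≤ (N:ℤ))]
        by_cases hiN1 : i - 1 ≤ (N:ℤ)
        · simp only [if_pos hiN1]
          have e : i - 1 = (N:ℤ) := by omega
          rw [e]
          have c := max_choice (f (N:ℤ) + (N:ℤ) - i) (if i % 2 = 0 then (2:ℤ) else 1)
          have l1 := le_max_left (f (N:ℤ) + (N:ℤ) - i) (if i % 2 = 0 then (2:ℤ) else 1)
          have l2 := le_max_right (f (N:ℤ) + (N:ℤ) - i) (if i % 2 = 0 then (2:ℤ) else 1)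
          split_ifs at c l1 l2 ⊢ with hp <;> omega
        · simp only [if_neg hiN1]
          have c1 := max_choice (f (N:ℤ) + (N:ℤ) - i) (if i % 2 = 0 then (2:ℤ) else 1)
          have l1 := le_max_left (f (N:ℤ) + (N:ℤ) - i) (if i % 2 = 0 then (2:ℤ) else 1)
          have l2 := le_max_right (f (N:ℤ) + (N:ℤ) - i) (if i % 2 = 0 then (2:ℤ) else 1)
          have c2 := max_choice (f (N:ℤ) + (N:ℤ) - (i-1)) (if (i-1) % 2 = 0 then (2:ℤ) else 1)
          have l3 := le_max_left (f (N:ℤ) + (N:ℤ) - (i-1)) (if (i-1) % 2 = 0 then (2:ℤ) else 1)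
          have l4 := le_max_right (f (N:ℤ) + (N:ℤ) - (i-1)) (if (i-1) % 2 = 0 then (2:ℤ) else 1)
          split_ifs at c1 l1 l2 c2 l3 l4 ⊢ with hp hq <;> omega
    · by_cases hMN : 2*(n:ℤ)-3 ≤ (N:ℤ)
      · simp only [if_pos hMN]
        have h1 := hbd (2*(n:ℤ)-3) hM0 (by omega)
        have h2 := hpos (2*(n:ℤ)-3) hM0 (by omega)
        omega
      · simp only [if_neg hMN]
        have hb := hbd (N:ℤ) hN0 le_rfl
        have c := max_choice (f (N:ℤ) + (N:ℤ) - (2*(n:ℤ)-3))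
          (if (2*(n:ℤ)-3) % 2 = 0 then (2:ℤ) else 1)
        have l2 := le_max_right (f (N:ℤ) + (N:ℤ) - (2*(n:ℤ)-3))
          (if (2*(n:ℤ)-3) % 2 = 0 then (2:ℤ) else 1)
        split_ifs at c l2 ⊢ with hp <;> omega
  -- the matrix
  set F : ℤ → ℤ → ℤ := fun i j =>
    if 0 ≤ j ∧ j ≤ i ∧ i ≤ 2*(n:ℤ)-3 then max 0 (g j + j - i) else 0 with hF
  have Fval : ∀ i j : ℤ, 0 ≤ j → j ≤ i → i ≤ 2*(n:ℤ)-3 → F i j = max 0 (g j + j - i) := by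
    intro i j h1 h2 h3; simp only [hF, if_pos (⟨h1, h2, h3⟩ : 0 ≤ j ∧ j ≤ i ∧ i ≤ 2*(n:ℤ)-3)]
  have Fzero : ∀ i j : ℤ, ¬(0 ≤ j ∧ j ≤ i ∧ i ≤ 2*(n:ℤ)-3) → F i j = 0 := by
    intro i j h; simp only [hF, if_neg h]
  have key : ∀ x : ℤ, 0 ≤ max 0 x ∧ x ≤ max 0 x ∧ (max 0 x = 0 ∨ max 0 x = x) :=
    fun x => ⟨le_max_left _ _, le_max_right _ _, max_choice _ _⟩
  have Fdiag : ∀ i : ℤ, 0 ≤ i → i ≤ 2*(n:ℤ)-3 → F i i = g i := by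
    intro i h1 h2
    rw [Fval i i h1 le_rfl h2]
    have h3 := gpos i h1 h2
    have k := key (g i + i - i)
    omega
  refine ⟨F, ⟨?_, ?_, ?_, ?_, ?_, ?_, ?_, ?_, ?_, ?_, ?_, ?_⟩, ?_⟩
  · -- nonneg
    intro i j
    by_cases h : 0 ≤ j ∧ j ≤ i ∧ i ≤ 2*(n:ℤ)-3
    · rw [Fval i j h.1 h.2.1 h.2.2]; exact le_max_left _ _
    · rw [Fzero i j h]
  · -- zero_outside
    intro i j h
    exact Fzero i j (by omega)
  · -- row_mono
    intro i j h1 h2 h3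
    rw [Fval i (j-1) (by omega) (by omega) h3, Fval i j (by omega) h2 h3]
    have hs := gstep j h1 (by omega)
    exact max_le_max le_rfl (by omega)
  · -- col_lb
    intro i j h1 h2 h3
    rw [Fval i j h1 (by omega) h3, Fval (i-1) j h1 (by omega) (by omega)]
    have k1 := key (g j + j - i)
    have k2 := key (g j + j - (i-1))
    omega
  · -- col_ub
    intro i j h1 h2 h3
    rw [Fval i j h1 (by omega) h3, Fval (i-1) j h1 (by omega) (by omega)]
    have k1 := key (g j + j - i)
    have k2 := key (g j + j - (i-1))
    omega
  · -- diag_pos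
    intro i h1 h2
    rw [Fdiag i h1 h2]
    have := gpos i h1 h2; omega
  · -- diag_first
    rw [Fdiag 0 le_rfl hM0]; exact g0
  · -- diag_step
    intro i h1 h2
    rw [Fdiag i (by omega) (by omega), Fdiag (i-1) (by omega) (by omega)]
    exact gstep i (by omega) (by omega)
  · -- diag_last
    rw [Fdiag _ hM0 le_rfl]; exact glast
  · -- subdiag
    intro i h1 h2
    rw [Fval i (i-1) (by omega) (by omega) h2, Fdiag (i-1) (by omega) (by omega)]
    have h3 := gpos (i-1) (by omega) (by omega)
    have k := key (g (i-1) + (i-1) - i)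
    omega
  · -- inner_lb
    intro i j h1 h2 h3 h4
    rw [Fval i j (by omega) (by omega) h2, Fval i (j-1) (by omega) (by omega) h2,
      Fval (i-1) j (by omega) (by omega) (by omega),
      Fval (i-1) (j-1) (by omega) (by omega) (by omega)]
    have hs := gstep j h3 (by omega)
    have k1 := key (g j + j - i)
    have k2 := key (g (j-1) + (j-1) - i)
    have k3 := key (g j + j - (i-1))
    have k4 := key (g (j-1) + (j-1) - (i-1))
    omega
  · -- inner_ub
    intro i j h1 h2 h3 h4
    rw [Fval i j (by omega) (by omega) h2, Fval i (j-1) (by omega) (by omega) h2,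
      Fval (i-1) j (by omega) (by omega) (by omega),
      Fval (i-1) (j-1) (by omega) (by omega) (by omega)]
    have hs := gstep j h3 (by omega)
    have k1 := key (g j + j - i)
    have k2 := key (g (j-1) + (j-1) - i)
    have k3 := key (g j + j - (i-1))
    have k4 := key (g (j-1) + (j-1) - (i-1))
    omega
  · -- diagonal matches f
    intro i h1 h2
    rw [Fdiag i h1 (le_trans h2 hN)]
    exact gA i h1 h2
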